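/- Let H be a binary matrix in which every column has at least two 1-entries, every row has at least two 1-entries, H contains no 2×2 all-ones submatrix, and rank(H·Hᵀ) = 1 over F_2. Then every pair of distinct rows of H shares exactly one common 1-position, and every row of H has odd weight. -/

import Mathlib

open Matrix

lemma zmod2_mul : ∀ a b : ZMod 2, a * b = if a = 1 ∧ b = 1 then 1 else 0 := by decide

lemma zmod2_cases : ∀ a : ZMod 2, a = 0 ∨ a = 1 := by decide

/-- If every column and every row of a binary matrix `H` has at
least two 1-entries, `H` has no `2 × 2` all-ones submatrix, and
`rank (H * Hᵀ) = 1` over `F_2`, then every pair of distinct rows shares exactly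
one common 1-position and every row has odd weight. -/
theorem stmt2 (v b : ℕ) (H : Matrix (Fin v) (Fin b) (ZMod 2))
    (hcol : ∀ j : Fin b, 2 ≤ (Finset.univ.filter (fun i : Fin v => H i j = 1)).card)
    (hrow : ∀ i : Fin v, 2 ≤ (Finset.univ.filter (fun j : Fin b => H i j = 1)).card)
    (h4 : ¬ ∃ (i₁ i₂ : Fin v) (j₁ j₂ : Fin b), i₁ ≠ i₂ ∧ j₁ ≠ j₂ ∧
      H i₁ j₁ = 1 ∧ H i₁ j₂ = 1 ∧ H i₂ j₁ = 1 ∧ H i₂ j₂ = 1)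
    (hrank : (H * Hᵀ).rank = 1) :
    (∀ i i' : Fin v, i ≠ i' →
      (Finset.univ.filter (fun j : Fin b => H i j = 1 ∧ H i' j = 1)).card = 1) ∧
    (∀ i : Fin v, Odd (Finset.univ.filter (fun j : Fin b => H i j = 1)).card) := by
  set M := H * Hᵀ with hM
  -- entry formula
  have hentry : ∀ i i' : Fin v, M i i' =
      ((Finset.univ.filter (fun j : Fin b => H i j = 1 ∧ H i' j = 1)).card : ZMod 2) := by
    intro i i'
    rw [hM, Matrix.mul_apply]
    rw [show (∑ j, H i j * Hᵀ j i') = ∑ j, if H i j = 1 ∧ H i' j = 1 then (1 : ZMod 2) else 0 by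
      apply Finset.sum_congr rfl; intro j _
      rw [Matrix.transpose_apply, zmod2_mul (H i j) (H i' j)]]
    rw [Finset.sum_boole]
  -- symmetry
  have hsym : ∀ i i' : Fin v, M i i' = M i' i := by
    intro i i'
    rw [hentry, hentry]
    congr 2
    apply Finset.filter_congr
    intro j _
    exact and_comm
  -- off-diagonal common count ≤ 1
  have hle1 : ∀ i i' : Fin v, i ≠ i' →
      (Finset.univ.filter (fun j : Fin b => H i j = 1 ∧ H i' j = 1)).card ≤ 1 := by
    intro i i' hne
    by_contra h
    push_neg at h
    obtain ⟨j₁, hj₁, j₂, hj₂, hjne⟩ := Finset.one_lt_card.mp h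
    rw [Finset.mem_filter] at hj₁ hj₂
    exact h4 ⟨i, i', j₁, j₂, hne, hjne, hj₁.2.1, hj₂.2.1, hj₁.2.2, hj₂.2.2⟩
  -- every row of M is nonzero
  have hrownz : ∀ i : Fin v, ∃ k : Fin v, M i k ≠ 0 := by
    intro i
    have h2 : 0 < (Finset.univ.filter (fun j : Fin b => H i j = 1)).card := by
      have := hrow i; omega
    obtain ⟨j, hj⟩ := Finset.card_pos.mp h2
    rw [Finset.mem_filter] at hj
    obtain ⟨i', hi'mem, hi'ne⟩ := Finset.exists_mem_ne
      (s := Finset.univ.filter (fun a : Fin v => H a j = 1)) (by have := hcol j; omega) i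
    rw [Finset.mem_filter] at hi'mem
    refine ⟨i', ?_⟩
    have hmem : j ∈ Finset.univ.filter (fun j : Fin b => H i j = 1 ∧ H i' j = 1) :=
      Finset.mem_filter.mpr ⟨Finset.mem_univ _, hj.2, hi'mem.2⟩
    have hge : 1 ≤ (Finset.univ.filter (fun j : Fin b => H i j = 1 ∧ H i' j = 1)).card :=
      Finset.card_pos.mpr ⟨j, hmem⟩
    have hle := hle1 i i' (Ne.symm hi'ne)
    have hcard : (Finset.univ.filter (fun j : Fin b => H i j = 1 ∧ H i' j = 1)).card = 1 := by
      omega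
    rw [hentry, hcard]
    decide
  -- key: all entries of M are 1
  have key : ∀ i i' : Fin v, M i i' = 1 := by
    intro i i'
    have hS : Module.finrank (ZMod 2) (LinearMap.range M.mulVecLin) = 1 := hrank
    -- columns of M are in the range
    have hcolmem : ∀ k : Fin v, (fun a => M a k) ∈ LinearMap.range M.mulVecLin := by
      intro k
      exact ⟨Pi.single k 1, by rw [Matrix.mulVecLin_apply, Matrix.mulVec_single_one]; rfl⟩
    -- each column is nonzero
    have hcolnz : ∀ k : Fin v, (fun a => M a k) ≠ (0 : Fin v → ZMod 2) := by
      intro k h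
      obtain ⟨a, ha⟩ := hrownz k
      exact ha (by rw [hsym k a]; exact congrFun h a)
    set w : Fin v → ZMod 2 := fun a => M a i with hw
    have hwnz : w ≠ 0 := hcolnz i
    have hspan : Submodule.span (ZMod 2) {w} = LinearMap.range M.mulVecLin := by
      apply Submodule.eq_of_le_of_finrank_eq
      · rw [Submodule.span_le, Set.singleton_subset_iff]
        exact hcolmem i
      · rw [finrank_span_singleton hwnz, hS]
    -- every column equals w
    have hcols : ∀ k : Fin v, (fun a => M a k) = w := by
      intro k
      have := hcolmem k
      rw [← hspan, Submodule.mem_span_singleton] at this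
      obtain ⟨c, hc⟩ := this
      rcases zmod2_cases c with h0 | h1
      · exfalso; apply hcolnz k; rw [← hc, h0, zero_smul]
      · rw [← hc, h1, one_smul]
    -- w is constant
    have hconst : ∀ a k : Fin v, w a = w k := by
      intro a k
      have h1 : M a k = w a := congrFun (hcols k) a
      have h2 : M k a = w k := congrFun (hcols a) k
      rw [← h1, hsym a k, h2]
    -- w is everywhere 1
    have hone : ∀ a : Fin v, w a = 1 := by
      intro a
      by_contra h
      apply hwnz
      funext k
      rcases zmod2_cases (w a) with h0 | h1
      · rw [← hconst a k] at *; exact h0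
      · exact absurd h1 h
    have := congrFun (hcols i') i
    rw [hone i] at this
    exact this
  constructor
  · intro i i' hne
    have h1 := key i i'
    rw [hentry] at h1
    have hle := hle1 i i' hne
    interval_cases h : (Finset.univ.filter (fun j : Fin b => H i j = 1 ∧ H i' j = 1)).card
    · exact absurd h1 (by decide)
    · rfl
  · intro i
    have h1 := key i i
    rw [hentry] at h1
    have heq : Finset.univ.filter (fun j : Fin b => H i j = 1 ∧ H i j = 1) =
        Finset.univ.filter (fun j : Fin b => H i j = 1) := by
      apply Finset.filter_congr; intro j _; simp
    rw [heq] at h1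
    rw [Nat.odd_iff]
    have := congrArg ZMod.val h1
    rwa [ZMod.val_natCast] at this
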